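/- Let n ≥ 3 and c ∈ int(Δ^{n-1}), and suppose x* ∈ int(Δ^{n-1}) is a fixed point of the DeGroot–Friedkin map f (i.e., f(x*) = x*). Then x* is the unique minimizer of x ↦ D_KL(x‖c) + H(1−x) over Δ^{n-1} \ {e₁,…,eₙ}: for every x ∈ Δ^{n-1} that is not a standard basis vector and with x ≠ x*, D_KL(x*‖c) + H(1−x*) < D_KL(x‖c) + H(1−x). -/

import Mathlib

open Finset

/-- Extropy `H(1-x)`. -/
noncomputable def extropy {n : ℕ} (x : Fin n → ℝ) : ℝ :=
  -∑ i, (1 - x i) * Real.log (1 - x i)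

/-- Kullback–Leibler divergence `D_KL(p‖q) = ∑ pᵢ log(pᵢ/qᵢ)` (with `0 log 0 = 0`). -/
noncomputable def klDiv {n : ℕ} (p q : Fin n → ℝ) : ℝ :=
  ∑ i, p i * Real.log (p i / q i)

/-- The DeGroot–Friedkin map `f(x) = (c ⊘ (1−x)) / ∑ᵢ cᵢ/(1−xᵢ)`. -/
noncomputable def DFmap {n : ℕ} (c x : Fin n → ℝ) : Fin n → ℝ :=
  fun i => (c i / (1 - x i)) / (∑ j, c j / (1 - x j))


noncomputable def fAux (a : ℝ) : ℝ := a * (1 - a) / (1 - 2*a)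

lemma fAux_pos {a : ℝ} (h0 : 0 < a) (h1 : a < 1/2) : 0 < fAux a := by
  have : 0 < 1 - 2*a := by linarith
  have : 0 < 1 - a := by linarith
  exact div_pos (by positivity) (by linarith)

lemma fAux_pair {a b : ℝ} (ha : 0 < a) (hb : 0 < b) (hab : a + b < 1/2) :
    fAux a + fAux b < fAux (a + b) := by
  have h1 : (0:ℝ) < 1 - 2*a := by linarith
  have h2 : (0:ℝ) < 1 - 2*b := by linarith
  have h3 : (0:ℝ) < 1 - 2*(a+b) := by linarith
  rw [fAux, fAux, fAux, div_add_div _ _ h1.ne' h2.ne', div_lt_div_iff₀ (by positivity) h3]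
  have key : (a+b) * (1 - (a+b)) * ((1 - 2*a)*(1 - 2*b))
      - (a*(1-a)*(1-2*b) + b*(1-b)*(1-2*a)) * (1 - 2*(a+b)) = 2*a*b*(1-(a+b)) := by ring
  nlinarith [mul_pos (mul_pos ha hb) (show (0:ℝ) < 1 - (a+b) by linarith)]

lemma fAux_sum {ι : Type*} [DecidableEq ι] (T : Finset ι) (a : ι → ℝ)
    (h0 : ∀ i ∈ T, 0 < a i) (hs : ∑ i ∈ T, a i < 1/2) :
    ∑ i ∈ T, fAux (a i) ≤ fAux (∑ i ∈ T, a i) := by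
  induction T using Finset.cons_induction with
  | empty => simp [fAux]
  | cons j T hj ih =>
    rw [Finset.sum_cons, Finset.sum_cons] at *
    have haj : 0 < a j := h0 j (Finset.mem_cons_self j T)
    have hT0 : ∀ i ∈ T, 0 < a i := fun i hi => h0 i (Finset.mem_cons_of_mem hi)
    have hTnn : 0 ≤ ∑ i ∈ T, a i := Finset.sum_nonneg fun i hi => (hT0 i hi).le
    have hTs : ∑ i ∈ T, a i < 1/2 := by linarith
    have ih' := ih hT0 hTs
    rcases T.eq_empty_or_nonempty with h | h
    · simp [h, fAux]
    · have hTpos : 0 < ∑ i ∈ T, a i := Finset.sum_pos hT0 h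
      have := fAux_pair haj hTpos hs
      linarith

lemma fAux_sum_strict {ι : Type*} [DecidableEq ι] (T : Finset ι) (a : ι → ℝ)
    (h0 : ∀ i ∈ T, 0 < a i) (hs : ∑ i ∈ T, a i < 1/2) (hcard : 2 ≤ T.card) :
    ∑ i ∈ T, fAux (a i) < fAux (∑ i ∈ T, a i) := by
  obtain ⟨j, hj⟩ := Finset.card_pos.1 (by omega : 0 < T.card)
  have herase : T.erase j |>.Nonempty := by
    rw [← Finset.card_pos, Finset.card_erase_of_mem hj]; omega
  rw [← Finset.add_sum_erase _ _ hj, ← Finset.add_sum_erase _ a hj] at *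
  have h0' : ∀ i ∈ T.erase j, 0 < a i := fun i hi => h0 i (Finset.mem_of_mem_erase hi)
  have haj : 0 < a j := h0 j hj
  have hE : 0 < ∑ i ∈ T.erase j, a i := Finset.sum_pos h0' herase
  have ihs : ∑ i ∈ T.erase j, a i < 1/2 := by linarith
  have h1 := fAux_sum (T.erase j) a h0' ihs
  have h2 := fAux_pair haj hE hs
  linarith

lemma quadForm_pos (n : ℕ) (hn : 3 ≤ n) (v d : Fin n → ℝ)
    (hv0 : ∀ i, 0 < v i) (hv1 : ∀ i, v i < 1) (hvs : ∑ i, v i = 1)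
    (hd : ∑ i, d i = 0) (k0 : Fin n) (hdk0 : d k0 ≠ 0) :
    0 < ∑ i, d i ^ 2 * (1 / v i - 1 / (1 - v i)) := by
  by_cases hbig : ∃ k, 1/2 ≤ v k
  · obtain ⟨k, hk⟩ := hbig
    -- all other coordinates are < 1/2
    have hsmall : ∀ i, i ≠ k → v i < 1/2 := by
      intro i hik
      -- find a third index m
      have hcard : ({i, k} : Finset (Fin n)).card ≤ 2 := by
        apply le_trans (Finset.card_insert_le _ _); simp
      have hne : ((Finset.univ : Finset (Fin n)) \ {i, k}).Nonempty := by
        rw [← Finset.card_pos, Finset.card_sdiff_of_subset (Finset.subset_univ _)]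
        have : (Finset.univ : Finset (Fin n)).card = n := Finset.card_univ.trans (Fintype.card_fin n)
        omega
      obtain ⟨m, hm⟩ := hne
      rw [Finset.mem_sdiff, Finset.mem_insert, Finset.mem_singleton] at hm
      push_neg at hm
      obtain ⟨-, hmi, hmk⟩ := hm
      have hsub : ({i, k, m} : Finset (Fin n)) ⊆ Finset.univ := Finset.subset_univ _
      have hsum3 : v i + v k + v m ≤ 1 := by
        have := Finset.sum_le_sum_of_subset_of_nonneg hsub
          (fun j _ _ => (hv0 j).le)
        rw [hvs] at this
        calc v i + v k + v m = ∑ j ∈ ({i, k, m} : Finset (Fin n)), v j := by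
              rw [Finset.sum_insert (by simp [hik, hmi.symm]),
                Finset.sum_insert (by simp [hmk.symm]), Finset.sum_singleton]; ring
          _ ≤ 1 := this
      have := hv0 m
      linarith
    -- split off coordinate k
    rw [← Finset.add_sum_erase _ _ (Finset.mem_univ k)]
    by_cases hdk : d k = 0
    · have hterm0 : d k ^ 2 * (1 / v k - 1 / (1 - v k)) = 0 := by rw [hdk]; ring
      rw [hterm0, zero_add]
      have hk0k : k0 ≠ k := fun h => hdk0 (by rw [h, hdk])
      have hk0mem : k0 ∈ Finset.univ.erase k := Finset.mem_erase.2 ⟨hk0k, Finset.mem_univ _⟩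
      apply Finset.sum_pos'
      · intro i hi
        have hik : i ≠ k := Finset.ne_of_mem_erase hi
        have hw : 0 < 1 / v i - 1 / (1 - v i) := by
          have h1 : 0 < v i := hv0 i
          have h2 : v i < 1/2 := hsmall i hik
          rw [sub_pos, div_lt_div_iff₀ (by linarith) h1]
          linarith
        exact mul_nonneg (sq_nonneg _) hw.le
      · refine ⟨k0, hk0mem, ?_⟩
        have hw : 0 < 1 / v k0 - 1 / (1 - v k0) := by
          have h1 : 0 < v k0 := hv0 k0
          have h2 : v k0 < 1/2 := hsmall k0 hk0k
          rw [sub_pos, div_lt_div_iff₀ (by linarith) h1]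
          linarith
        have hd2 : 0 < d k0 ^ 2 := lt_of_le_of_ne (sq_nonneg _) (Ne.symm (pow_ne_zero 2 hdk0))
        exact mul_pos hd2 hw
    · -- d k ≠ 0
      have hvk1 : v k < 1 := hv1 k
      have herased : ∑ i ∈ Finset.univ.erase k, d i = - d k := by
        have := Finset.add_sum_erase Finset.univ d (Finset.mem_univ k)
        linarith [this.symm ▸ hd]
      have herasev : ∑ i ∈ Finset.univ.erase k, v i = 1 - v k := by
        have := Finset.add_sum_erase Finset.univ v (Finset.mem_univ k)
        rw [hvs] at this; linarith
      have hcard_erase : 2 ≤ (Finset.univ.erase k).card := by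
        rw [Finset.card_erase_of_mem (Finset.mem_univ k)]
        have : (Finset.univ : Finset (Fin n)).card = n := Finset.card_univ.trans (Fintype.card_fin n)
        omega
      have h0' : ∀ i ∈ Finset.univ.erase k, 0 < v i := fun i _ => hv0 i
      -- Engel form Cauchy-Schwarz
      have hfpos : ∀ i ∈ Finset.univ.erase k, 0 < fAux (v i) := fun i hi =>
        fAux_pos (hv0 i) (hsmall i (Finset.ne_of_mem_erase hi))
      have hCS := Finset.sq_sum_div_le_sum_sq_div (Finset.univ.erase k) d
        (g := fun i => fAux (v i)) hfpos
      rw [herased] at hCS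
      have hQpos : 0 < ∑ i ∈ Finset.univ.erase k, fAux (v i) :=
        Finset.sum_pos hfpos (Finset.card_pos.1 (by omega))
      have hPeq : ∑ i ∈ Finset.univ.erase k, d i ^ 2 * (1 / v i - 1 / (1 - v i))
          = ∑ i ∈ Finset.univ.erase k, d i ^ 2 / fAux (v i) := by
        apply Finset.sum_congr rfl
        intro i hi
        have h1 : 0 < v i := hv0 i
        have h2 : v i < 1/2 := hsmall i (Finset.ne_of_mem_erase hi)
        have h3 : 1 - 2 * v i ≠ 0 := ne_of_gt (by linarith)
        have h4 : (1:ℝ) - v i ≠ 0 := ne_of_gt (by linarith)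
        rw [eq_div_iff (fAux_pos h1 h2).ne', fAux]
        field_simp
        rw [div_eq_iff (by contrapose! h3; linarith)]; ring
      rw [hPeq]
      have hP1 : d k ^ 2 / (∑ i ∈ Finset.univ.erase k, fAux (v i))
          ≤ ∑ i ∈ Finset.univ.erase k, d i ^ 2 / fAux (v i) := by
        have : (-d k) ^ 2 = d k ^ 2 := by ring
        rw [this] at hCS; exact hCS
      rcases eq_or_lt_of_le hk with hk' | hk'
      · -- v k = 1/2 : the k-term vanishes
        have hterm : d k ^ 2 * (1 / v k - 1 / (1 - v k)) = 0 := by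
          rw [← hk']; norm_num
        have : 0 < d k ^ 2 / (∑ i ∈ Finset.univ.erase k, fAux (v i)) :=
          div_pos (by positivity) hQpos
        linarith
      · -- v k > 1/2
        have hQlt : (∑ i ∈ Finset.univ.erase k, fAux (v i)) < fAux (1 - v k) := by
          have := fAux_sum_strict (Finset.univ.erase k) v h0'
            (by rw [herasev]; linarith) hcard_erase
          rwa [herasev] at this
        have hfc : 0 < fAux (1 - v k) := by
          rw [fAux]
          apply div_pos
          · nlinarith
          · linarith
        have hlt : d k ^ 2 / fAux (1 - v k)
            < d k ^ 2 / (∑ i ∈ Finset.univ.erase k, fAux (v i)) :=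
          div_lt_div_of_pos_left (by positivity) hQpos hQlt
        have hterm : d k ^ 2 * (1 / v k - 1 / (1 - v k)) = -(d k ^ 2 / fAux (1 - v k)) := by
          have h1 : v k ≠ 0 := (hv0 k).ne'
          have h2 : (1 : ℝ) - v k ≠ 0 := by intro h; rw [sub_eq_zero] at h; exact hvk1.ne h.symm
          have h3 : (1 : ℝ) - 2*(1 - v k) ≠ 0 := by intro h; nlinarith [hk']
          rw [fAux]
          field_simp
          rw [show (1:ℝ) - (1 - v k) = v k by ring, mul_div_cancel_left₀ _ h1]; ring
        rw [hterm]
        linarith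
  · push_neg at hbig
    apply Finset.sum_pos'
    · intro i _
      have hw : 0 < 1 / v i - 1 / (1 - v i) := by
        have h1 : 0 < v i := hv0 i
        rw [sub_pos, div_lt_div_iff₀ (by linarith [hbig i]) h1]
        linarith [hbig i]
      positivity
    · refine ⟨k0, Finset.mem_univ _, ?_⟩
      have hw : 0 < 1 / v k0 - 1 / (1 - v k0) := by
        have h1 : 0 < v k0 := hv0 k0
        rw [sub_pos, div_lt_div_iff₀ (by linarith [hbig k0]) h1]
        linarith [hbig k0]
      positivity

lemma core_pos (n : ℕ) (hn : 3 ≤ n) (s x : Fin n → ℝ)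
    (hs0 : ∀ i, 0 < s i) (hs1 : ∀ i, s i < 1) (hssum : ∑ i, s i = 1)
    (hx0 : ∀ i, 0 ≤ x i) (hx1 : ∀ i, x i < 1) (hxsum : ∑ i, x i = 1)
    (hne : x ≠ s) :
    0 < ∑ i, ((x i * Real.log (x i) - (1 - x i) * Real.log (1 - x i))
      - (s i * Real.log (s i) - (1 - s i) * Real.log (1 - s i))
      - (x i - s i) * (Real.log (s i) + Real.log (1 - s i))) := by
  set d : Fin n → ℝ := fun i => x i - s i with hd_def
  have hdsum : ∑ i, d i = 0 := by
    simp only [hd_def, Finset.sum_sub_distrib, hxsum, hssum, sub_self]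
  have hdk : ∃ k, d k ≠ 0 := by
    by_contra h
    push_neg at h
    refine hne (funext fun i => ?_)
    have := h i
    simp only [hd_def, sub_eq_zero] at this
    exact this
  obtain ⟨k0, hdk0⟩ := hdk
  set u : ℝ → Fin n → ℝ := fun t i => s i + t * d i with hu_def
  have hu0 : ∀ t ∈ Set.Ico (0:ℝ) 1, ∀ i, 0 < u t i := by
    rintro t ⟨ht0, ht1⟩ i
    have heq : u t i = (1 - t) * s i + t * x i := by simp only [hu_def, hd_def]; ring
    rw [heq]
    have h1 : 0 < (1 - t) * s i := mul_pos (by linarith) (hs0 i)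
    have h2 : 0 ≤ t * x i := mul_nonneg ht0 (hx0 i)
    linarith
  have hu1 : ∀ t ∈ Set.Icc (0:ℝ) 1, ∀ i, u t i < 1 := by
    rintro t ⟨ht0, ht1⟩ i
    have heq : u t i = (1 - t) * s i + t * x i := by simp only [hu_def, hd_def]; ring
    rw [heq]
    rcases lt_or_ge t 1 with h | h
    · have h1 : (1 - t) * s i < (1 - t) * 1 := mul_lt_mul_of_pos_left (hs1 i) (by linarith)
      have h2 : t * x i ≤ t * 1 := mul_le_mul_of_nonneg_left (hx1 i).le ht0
      linarith
    · have ht : t = 1 := le_antisymm ht1 h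
      rw [ht]
      have := hx1 i
      linarith [hx1 i]
  have husum : ∀ t : ℝ, ∑ i, u t i = 1 := by
    intro t
    simp only [hu_def]
    rw [Finset.sum_add_distrib, hssum, ← Finset.mul_sum, hdsum, mul_zero, add_zero]
  have hu_deriv : ∀ (t : ℝ) (i : Fin n), HasDerivAt (fun t => u t i) (d i) t := by
    intro t i
    simpa [hu_def] using (hasDerivAt_mul_const (d i)).const_add (s i)
  set W : Fin n → ℝ := fun i => Real.log (s i) + Real.log (1 - s i) with hW_def
  set g : ℝ → ℝ := fun t => ∑ i, ((u t i * Real.log (u t i) - (1 - u t i) * Real.log (1 - u t i))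
      - (s i * Real.log (s i) - (1 - s i) * Real.log (1 - s i))
      - (u t i - s i) * W i) with hg_def
  set q : ℝ → ℝ := fun t => ∑ i, d i * (Real.log (u t i) + Real.log (1 - u t i) + 2 - W i)
    with hq_def
  -- derivative of g is q on [0,1)
  have hg_deriv : ∀ t ∈ Set.Ico (0:ℝ) 1, HasDerivAt g (q t) t := by
    intro t ht
    have hterm : ∀ i : Fin n, HasDerivAt
        (fun t => (u t i * Real.log (u t i) - (1 - u t i) * Real.log (1 - u t i))
          - (s i * Real.log (s i) - (1 - s i) * Real.log (1 - s i)) - (u t i - s i) * W i)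
        (d i * (Real.log (u t i) + Real.log (1 - u t i) + 2 - W i)) t := by
      intro i
      have hui0 : 0 < u t i := hu0 t ht i
      have hui1 : u t i < 1 := hu1 t (Set.Ico_subset_Icc_self ht) i
      have h1 : HasDerivAt (fun t => u t i * Real.log (u t i))
          ((Real.log (u t i) + 1) * d i) t :=
        by have := (Real.hasDerivAt_mul_log hui0.ne').comp t (hu_deriv t i); exact this
      have h2 : HasDerivAt (fun t => (1 - u t i) * Real.log (1 - u t i))
          ((Real.log (1 - u t i) + 1) * (-d i)) t :=
        by have := (Real.hasDerivAt_mul_log (by linarith : (1:ℝ) - u t i ≠ 0)).comp t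
              ((hu_deriv t i).const_sub 1); exact this
      have h3 : HasDerivAt (fun t => (u t i - s i) * W i) (d i * W i) t :=
        ((hu_deriv t i).sub_const (s i)).mul_const _
      have h := ((h1.sub h2).sub_const
        (s i * Real.log (s i) - (1 - s i) * Real.log (1 - s i))).sub h3
      exact h.congr_deriv (by ring)
    have h := HasDerivAt.fun_sum (fun i (_ : i ∈ Finset.univ) => hterm i)
    exact h
  -- derivative of q on [0,1)
  have hq_deriv : ∀ t ∈ Set.Ico (0:ℝ) 1, HasDerivAt q
      (∑ i, d i ^ 2 * (1 / u t i - 1 / (1 - u t i))) t := by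
    intro t ht
    have hterm : ∀ i : Fin n, HasDerivAt
        (fun t => d i * (Real.log (u t i) + Real.log (1 - u t i) + 2 - W i))
        (d i ^ 2 * (1 / u t i - 1 / (1 - u t i))) t := by
      intro i
      have hui0 : 0 < u t i := hu0 t ht i
      have hui1 : u t i < 1 := hu1 t (Set.Ico_subset_Icc_self ht) i
      have hl1 : HasDerivAt (fun t => Real.log (u t i)) ((u t i)⁻¹ * d i) t :=
        by have := (Real.hasDerivAt_log hui0.ne').comp t (hu_deriv t i); exact this
      have hl2 : HasDerivAt (fun t => Real.log (1 - u t i)) ((1 - u t i)⁻¹ * (-d i)) t :=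
        by have := (Real.hasDerivAt_log (by linarith : (1:ℝ) - u t i ≠ 0)).comp t
              ((hu_deriv t i).const_sub 1); exact this
      have h := (((hl1.add hl2).add_const 2).sub_const (W i)).const_mul (d i)
      exact h.congr_deriv (by ring)
    exact HasDerivAt.fun_sum (fun i (_ : i ∈ Finset.univ) => hterm i)
  have hq0 : q 0 = 0 := by
    simp only [hq_def]
    have : ∀ i ∈ Finset.univ,
        d i * (Real.log (u 0 i) + Real.log (1 - u 0 i) + 2 - W i) = 2 * d i := by
      intro i _
      have h : u 0 i = s i := by simp [hu_def]
      rw [h, hW_def]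
      ring
    rw [Finset.sum_congr rfl this, ← Finset.mul_sum, hdsum, mul_zero]
  have hq_pos : ∀ t ∈ Set.Ioo (0:ℝ) 1, 0 < q t := by
    rintro t ⟨ht0, ht1⟩
    have hmono : StrictMonoOn q (Set.Icc 0 t) := by
      apply strictMonoOn_of_deriv_pos (convex_Icc 0 t)
      · intro y hy
        exact (hq_deriv y ⟨hy.1, lt_of_le_of_lt hy.2 ht1⟩).continuousAt.continuousWithinAt
      · intro y hy
        rw [interior_Icc] at hy
        have hy' : y ∈ Set.Ico (0:ℝ) 1 := ⟨hy.1.le, lt_trans hy.2 ht1⟩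
        rw [(hq_deriv y hy').deriv]
        exact quadForm_pos n hn (u y) d (hu0 y hy') (hu1 y (Set.Ico_subset_Icc_self hy'))
          (husum y) hdsum k0 hdk0
    have := hmono (Set.left_mem_Icc.2 ht0.le) (Set.right_mem_Icc.2 ht0.le) ht0
    rw [hq0] at this
    exact this
  have hg_cont : ContinuousOn g (Set.Icc 0 1) := by
    apply Continuous.continuousOn
    rw [hg_def]
    apply continuous_finset_sum
    intro i _
    have hcu : Continuous (fun t : ℝ => u t i) := by
      simp only [hu_def]
      exact continuous_const.add (continuous_id.mul continuous_const)
    exact (((Real.continuous_mul_log.comp hcu).sub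
      (Real.continuous_mul_log.comp (continuous_const.sub hcu))).sub continuous_const).sub
      ((hcu.sub continuous_const).mul continuous_const)
  have hgmono : StrictMonoOn g (Set.Icc 0 1) := by
    apply strictMonoOn_of_deriv_pos (convex_Icc 0 1) hg_cont
    intro y hy
    rw [interior_Icc] at hy
    rw [(hg_deriv y ⟨hy.1.le, hy.2⟩).deriv]
    exact hq_pos y hy
  have h01 : g 0 < g 1 := hgmono (Set.left_mem_Icc.2 zero_le_one)
    (Set.right_mem_Icc.2 zero_le_one) zero_lt_one
  have hg0 : g 0 = 0 := by
    simp only [hg_def]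
    apply Finset.sum_eq_zero
    intro i _
    have h : u 0 i = s i := by simp [hu_def]
    rw [h]
    ring
  have hg1 : g 1 = ∑ i, ((x i * Real.log (x i) - (1 - x i) * Real.log (1 - x i))
      - (s i * Real.log (s i) - (1 - s i) * Real.log (1 - s i))
      - (x i - s i) * (Real.log (s i) + Real.log (1 - s i))) := by
    simp only [hg_def]
    apply Finset.sum_congr rfl
    intro i _
    have h : u 1 i = x i := by simp only [hu_def, hd_def]; ring
    rw [h, hW_def]
  rw [← hg1]
  linarith


/-- For `n ≥ 3` and `c ∈ int(Δ^{n-1})`, an interior fixed point `x*` of the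
DeGroot–Friedkin map is the unique minimizer of `x ↦ D_KL(x‖c) + H(1−x)` over
the simplex minus its vertices. -/
theorem DFmap_fixedPoint_is_unique_minimizer (n : ℕ) (hn : 3 ≤ n)
    (c : Fin n → ℝ) (hc : ∀ i, 0 < c i) (hcsum : ∑ i, c i = 1)
    (xs : Fin n → ℝ) (hxs : ∀ i, 0 < xs i) (hxssum : ∑ i, xs i = 1)
    (hfix : DFmap c xs = xs) :
    ∀ x : Fin n → ℝ, (∀ i, 0 ≤ x i) → (∑ i, x i = 1) →
      (∀ i : Fin n, x ≠ (fun j => if j = i then (1 : ℝ) else 0)) →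
      x ≠ xs →
      klDiv xs c + extropy xs < klDiv x c + extropy x := by
  intro x hx0 hxsum hvert hxne
  -- coordinates of xs are < 1
  have hnontriv : Nontrivial (Fin n) :=
    ⟨⟨⟨0, by omega⟩, ⟨1, by omega⟩, by simp [Fin.ext_iff]⟩⟩
  have hxs1 : ∀ i, xs i < 1 := by
    intro i
    obtain ⟨j, hj⟩ := exists_ne i
    have hsle := Finset.sum_le_sum_of_subset_of_nonneg
      (Finset.subset_univ ({j, i} : Finset (Fin n))) (fun k _ _ => (hxs k).le)
    rw [Finset.sum_pair hj, hxssum] at hsle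
    linarith [hxs j]
  -- coordinates of x are < 1 (x is not a vertex)
  have hx1 : ∀ i, x i < 1 := by
    intro i
    by_contra hle
    push_neg at hle
    have hsplit := Finset.add_sum_erase Finset.univ x (Finset.mem_univ i)
    rw [hxsum] at hsplit
    have hrest : 0 ≤ ∑ j ∈ Finset.univ.erase i, x j :=
      Finset.sum_nonneg fun j _ => hx0 j
    have hz := (Finset.sum_eq_zero_iff_of_nonneg (fun j _ => hx0 j)).1
      (by linarith : ∑ j ∈ Finset.univ.erase i, x j = 0)
    apply hvert i
    funext j
    by_cases hji : j = i
    · subst hji; rw [if_pos rfl]; linarith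
    · simp only [hji, if_neg hji]
      exact hz j (Finset.mem_erase.2 ⟨hji, Finset.mem_univ j⟩)
  -- the normalization constant
  set S : ℝ := ∑ j, c j / (1 - xs j) with hS_def
  have hS : 0 < S := by
    apply Finset.sum_pos
    · intro j _
      exact div_pos (hc j) (by linarith [hxs1 j])
    · exact ⟨⟨0, by omega⟩, Finset.mem_univ _⟩
  have hceq : ∀ i, c i = S * (xs i * (1 - xs i)) := by
    intro i
    have h := congrFun hfix i
    simp only [DFmap] at h
    rw [← hS_def] at h
    have h1 : (1:ℝ) - xs i ≠ 0 := ne_of_gt (by linarith [hxs1 i])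
    field_simp at h
    linarith [h]
  -- expansion of the objective
  have hexp : ∀ p : Fin n → ℝ, (∀ i, 0 ≤ p i) → (∑ i, p i = 1) →
      klDiv p c + extropy p
        = (∑ i, (p i * Real.log (p i) - (1 - p i) * Real.log (1 - p i)
            - p i * (Real.log (xs i) + Real.log (1 - xs i)))) - Real.log S := by
    intro p hp0 hpsum
    have hterm : ∀ i ∈ Finset.univ, p i * Real.log (p i / c i)
        = p i * Real.log (p i) - p i * (Real.log (xs i) + Real.log (1 - xs i))
          - p i * Real.log S := by
      intro i _
      rcases eq_or_lt_of_le (hp0 i) with h | h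
      · rw [← h]; simp
      · have hxs0 : xs i ≠ 0 := (hxs i).ne'
        have hxs1' : (1:ℝ) - xs i ≠ 0 := ne_of_gt (by linarith [hxs1 i])
        rw [Real.log_div h.ne' (hc i).ne', hceq i,
          Real.log_mul hS.ne' (mul_ne_zero hxs0 hxs1'), Real.log_mul hxs0 hxs1']
        ring
    have h1 : klDiv p c
        = (∑ i, (p i * Real.log (p i) - p i * (Real.log (xs i) + Real.log (1 - xs i))))
          - Real.log S := by
      rw [klDiv, Finset.sum_congr rfl hterm, Finset.sum_sub_distrib, ← Finset.sum_mul, hpsum,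
        one_mul]
    have h2 : ∑ i, (p i * Real.log (p i) - (1 - p i) * Real.log (1 - p i)
          - p i * (Real.log (xs i) + Real.log (1 - xs i)))
        = (∑ i, (p i * Real.log (p i) - p i * (Real.log (xs i) + Real.log (1 - xs i))))
          - ∑ i, (1 - p i) * Real.log (1 - p i) := by
      rw [← Finset.sum_sub_distrib]
      apply Finset.sum_congr rfl
      intros; ring
    rw [h1, extropy, h2]
    ring
  have hxs0' : ∀ i, 0 ≤ xs i := fun i => (hxs i).le
  rw [hexp xs hxs0' hxssum, hexp x hx0 hxsum]
  have hcore := core_pos n hn xs x hxs hxs1 hxssum hx0 hx1 hxsum hxne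
  have hdiff : (∑ i, (x i * Real.log (x i) - (1 - x i) * Real.log (1 - x i)
        - x i * (Real.log (xs i) + Real.log (1 - xs i))))
      - (∑ i, (xs i * Real.log (xs i) - (1 - xs i) * Real.log (1 - xs i)
        - xs i * (Real.log (xs i) + Real.log (1 - xs i))))
      = ∑ i, ((x i * Real.log (x i) - (1 - x i) * Real.log (1 - x i))
        - (xs i * Real.log (xs i) - (1 - xs i) * Real.log (1 - xs i))
        - (x i - xs i) * (Real.log (xs i) + Real.log (1 - xs i))) := by
    rw [← Finset.sum_sub_distrib]
    apply Finset.sum_congr rfl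
    intros; ring
  linarith
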